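/- Special case of Theorem 2: let {u_n(t)} be the solution of the (N,α)-regularized initial value problem with N ≥ 2 and initial data a. Then the state at time t = 3/4 from scale 2 onward is given by (u_2(3/4), u_3(3/4), …) = Ψ_2 ∘ Ψ_1(a), where Ψ_1 = ξ + φ^{(N−1,α)} ∘ σ_+ and Ψ_2 = ξ + φ^{(N−2,α)} ∘ σ_+. -/

import Mathlib

/-!
Dynamics on the fractal space-time lattice (scales `n = 0,1,2,…`, turnover
times `τ_n = 2⁻ⁿ`).  The state of scale `n` at lattice time `t = m * τ_n`
is encoded as `u n m` (per-scale time index `m`).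
-/

/-- The transfer fraction `f_n(t)` of the `(N,α)`-regularized system at scale `n`
and per-scale time index `m` (so real time `t = m * 2⁻ⁿ`):
`f_n(t) = f (u_n(t), u_{n+1}(t))` for `n < N` and `f_N(t) = α`.
Note that `u_{n+1}(t)` has per-scale time index `2 * m`. -/
noncomputable def transfer (f : ℝ → ℝ → ℝ) (N : ℕ) (α : ℝ) (u : ℕ → ℕ → ℝ)
    (n m : ℕ) : ℝ :=
  if n < N then f (u n m) (u (n + 1) (2 * m)) else α

/-- `IsSol f N α a u` says that the field `{u_n(t)}`, encoded as `u n m` with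
`t = m * τ_n`, `τ_n = 2⁻ⁿ`, solves the `(N,α)`-regularized initial value
problem on the fractal lattice with initial data `a`:
* `u_n(0) = a_n`;
* for `n ≤ N` and `t = m * τ_n`,
  `u_n(t + τ_n) = (1 − f_n(t)) u_n(t) + χ_even(m) f_{n−1}(t) u_{n−1}(t)`,
  where `u_{−1} ≡ 0` (the incoming term is absent for `n = 0`) and `u_{n-1}(t)`
  has per-scale index `m / 2` (the incoming term is present only for even `m`);
* `u_n(t) = 0` for `n > N` and `t > 0`. -/
noncomputable def IsSol (f : ℝ → ℝ → ℝ) (N : ℕ) (α : ℝ) (a : ℕ → ℝ)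
    (u : ℕ → ℕ → ℝ) : Prop :=
  (∀ n, u n 0 = a n) ∧
  (∀ n, n ≤ N → ∀ m : ℕ,
    u n (m + 1) = (1 - transfer f N α u n m) * u n m +
      (if Even m ∧ n ≠ 0 then transfer f N α u (n - 1) (m / 2) * u (n - 1) (m / 2)
       else 0)) ∧
  (∀ n, N < n → ∀ m : ℕ, 0 < m → u n m = 0)

/-- `sol1 u` is the state `u(1)` at the large-scale turnover time `τ_0 = 1`:
the `n`-th component is `u_n(1)`, whose per-scale time index is `2^n`. -/
def sol1 (u : ℕ → ℕ → ℝ) : ℕ → ℝ := fun n => u n (2 ^ n)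

/-- The left shift `σ₊(a) = (a_1, a_2, …)`. -/
def sigmaPlus (a : ℕ → ℝ) : ℕ → ℝ := fun n => a (n + 1)

/-- The right shift `σ₋(a) = (0, a_0, a_1, …)`. -/
def sigmaMinus (a : ℕ → ℝ) : ℕ → ℝ := fun n => if n = 0 then 0 else a (n - 1)

/-- The large-scale projector `π₀(a) = (a_0, 0, 0, …)`. -/
def piZero (a : ℕ → ℝ) : ℕ → ℝ := fun n => if n = 0 then a 0 else 0

/-- The energy transfer map `ξ(a) = (f(a_0,a_1)·a_0, 0, 0, …)`. -/
def xiMap (f : ℝ → ℝ → ℝ) (a : ℕ → ℝ) : ℕ → ℝ :=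
  fun n => if n = 0 then f (a 0) (a 1) * a 0 else 0


private lemma key_lemma (f : ℝ → ℝ → ℝ) (α : ℝ) (M : ℕ) (hM : 1 ≤ M)
    (U V : ℕ → ℕ → ℝ)
    (hU : ∀ k, 2 ≤ k → k ≤ M → ∀ m : ℕ,
      U k (m + 1) = (1 - (if k < M then f (U k m) (U (k + 1) (2 * m)) else α)) * U k m +
        (if Even m then
          (if k - 1 < M then f (U (k - 1) (m / 2)) (U k (2 * (m / 2))) else α) * U (k - 1) (m / 2)
        else 0))
    (hU3 : ∀ k, M < k → ∀ m : ℕ, 0 < m → U k m = 0)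
    (hV2 : ∀ n, n ≤ M - 1 → ∀ m : ℕ,
      V n (m + 1) = (1 - transfer f (M - 1) α V n m) * V n m +
        (if Even m ∧ n ≠ 0 then transfer f (M - 1) α V (n - 1) (m / 2) * V (n - 1) (m / 2)
         else 0))
    (hV3 : ∀ n, M - 1 < n → ∀ m : ℕ, 0 < m → V n m = 0)
    (hinit : ∀ n, V n 0 = U (n + 1) 0) :
    ∀ n m : ℕ, m ≤ 2 ^ n → (n = 0 → m = 0) → V n m = U (n + 1) m := by
  suffices H : ∀ K n m : ℕ, m * 2 ^ (M - n) ≤ K → m ≤ 2 ^ n → (n = 0 → m = 0) →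
      V n m = U (n + 1) m from fun n m hm h0 => H _ n m le_rfl hm h0
  intro K
  induction K with
  | zero =>
    intro n m hK hm h0
    have hp : 0 < 2 ^ (M - n) := Nat.pow_pos (by norm_num)
    have hm0 : m = 0 := by
      rcases Nat.mul_eq_zero.mp (Nat.le_zero.mp hK) with h | h
      · exact h
      · omega
    subst hm0; exact hinit n
  | succ K ih =>
    intro n m hK hm h0
    match m with
    | 0 => exact hinit n
    | (m + 1) =>
      have hn : n ≠ 0 := fun h => by simpa using h0 h
      have hn1 : 1 ≤ n := Nat.one_le_iff_ne_zero.mpr hn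
      by_cases hnM : n ≤ M - 1
      · -- active case
        have hnM' : n < M := by omega
        have hpow : (1:ℕ) ≤ 2 ^ (M - n) := Nat.one_le_two_pow
        have hKm : m * 2 ^ (M - n) ≤ K := by
          have hx : (m + 1) * 2 ^ (M - n) = m * 2 ^ (M - n) + 2 ^ (M - n) := by ring
          omega
        have e1 : V n m = U (n + 1) m := ih n m hKm (by omega) (fun h => absurd h hn)
        have e2 : V (n + 1) (2 * m) = U (n + 1 + 1) (2 * m) := by
          apply ih (n + 1) (2 * m) ?_ ?_ (by omega)
          · have h1 : M - n = (M - (n + 1)) + 1 := by omega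
            have h2 : 2 * m * 2 ^ (M - (n + 1)) = m * 2 ^ (M - n) := by
              rw [h1, pow_succ]; ring
            omega
          · have h3 : 2 ^ (n + 1) = 2 * 2 ^ n := by rw [pow_succ]; ring
            omega
        have key_trans : transfer f (M - 1) α V n m =
            (if n + 1 < M then f (U (n + 1) m) (U (n + 1 + 1) (2 * m)) else α) := by
          unfold transfer
          rw [e1, e2]
          by_cases h : n < M - 1
          · rw [if_pos h, if_pos (by omega)]
          · rw [if_neg h, if_neg (by omega)]
        rw [hV2 n hnM m, hU (n + 1) (by omega) (by omega) m, key_trans, e1]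
        congr 1
        by_cases hev : Even m
        · rw [if_pos ⟨hev, hn⟩, if_pos hev]
          obtain ⟨r, hr⟩ := hev
          have h2m : 2 * (m / 2) = m := by omega
          have e3 : V (n - 1) (m / 2) = U (n - 1 + 1) (m / 2) := by
            apply ih (n - 1) (m / 2) ?_ ?_ ?_
            · have h1 : M - (n - 1) = (M - n) + 1 := by omega
              have h3 : m / 2 * 2 = m := by omega
              have h2 : m / 2 * 2 ^ (M - (n - 1)) = m / 2 * 2 * 2 ^ (M - n) := by
                rw [h1, pow_succ]; ring
              rw [h3] at h2
              exact le_trans (le_of_eq h2) hKm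
            · have h4 : 2 ^ n = 2 * 2 ^ (n - 1) := by
                rw [← pow_succ']; congr 1; omega
              omega
            · intro h5
              have h6 : n = 1 := by omega
              rw [h6] at hm
              simp at hm
              omega
          have hn' : n - 1 + 1 = n := by omega
          rw [hn'] at e3
          have key_trans2 : transfer f (M - 1) α V (n - 1) (m / 2) =
              (if n + 1 - 1 < M then f (U (n + 1 - 1) (m / 2)) (U (n + 1) (2 * (m / 2))) else α) := by
            unfold transfer
            rw [hn', h2m, e3, e1]
            simp only [Nat.add_sub_cancel]
            by_cases h : n - 1 < M - 1
            · rw [if_pos h, if_pos (by omega)]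
            · rw [if_neg h, if_neg (by omega)]
          rw [key_trans2, e3]
          simp only [Nat.add_sub_cancel, h2m]
        · rw [if_neg (fun h => hev h.1), if_neg hev]
      · rw [hV3 n (by omega) (m + 1) (by omega), hU3 (n + 1) (by omega) (m + 1) (by omega)]

/-- special case of Theorem 2: let `u` solve the
`(N,α)`-regularized initial value problem with `N ≥ 2` and data `a`.  Let
`v` solve the `(N−1,α)` problem with data `σ₊(a)` (so that
`Ψ₁(a) = ξ(a) + φ^{(N−1,α)}(σ₊ a) = ξ(a) + sol1 v =: b`), and let `w` solve
the `(N−2,α)` problem with data `σ₊(b)` (so that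
`Ψ₂(b) = ξ(b) + φ^{(N−2,α)}(σ₊ b) = ξ(b) + sol1 w`).  Then
`(u_2(3/4), u_3(3/4), …) = Ψ₂ ∘ Ψ₁ (a)`; in per-scale indices the `j`-th
component `u_{2+j}(3/4)` of the left-hand side is `u (2+j) (3 * 2^j)`. -/
theorem theorem2_special_case
    (f : ℝ → ℝ → ℝ) (hf : ∀ x y : ℝ, 0 ≤ x → 0 ≤ y → f x y ∈ Set.Icc (0 : ℝ) 1)
    (N : ℕ) (hN : 2 ≤ N) (α : ℝ) (hα : α ∈ Set.Icc (0 : ℝ) 1)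
    (a : ℕ → ℝ) (ha : ∀ n, 0 ≤ a n)
    (u v w : ℕ → ℕ → ℝ)
    (hu : IsSol f N α a u)
    (hv : IsSol f (N - 1) α (sigmaPlus a) v)
    (b : ℕ → ℝ) (hb : b = xiMap f a + sol1 v)
    (hw : IsSol f (N - 2) α (sigmaPlus b) w) :
    ∀ j : ℕ, u (2 + j) (3 * 2 ^ j) = xiMap f b j + sol1 w j := by
  obtain ⟨hu1, hu2, hu3⟩ := hu
  obtain ⟨hv1, hv2, hv3⟩ := hv
  rw [show (N : ℕ) - 2 = N - 1 - 1 from by omega] at hw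
  obtain ⟨hw1, hw2, hw3⟩ := hw
  have hN1 : 1 ≤ N := by omega
  have hN2 : 1 ≤ N - 1 := by omega
  -- Lemma A : v tracks u shifted by one scale on [0, 1/2]
  have lemA : ∀ n m : ℕ, m ≤ 2 ^ n → (n = 0 → m = 0) → v n m = u (n + 1) m := by
    apply key_lemma f α N hN1 u v
    · intro k hk2 hkM m
      rw [hu2 k hkM m]
      unfold transfer
      rw [show k - 1 + 1 = k from by omega]
      congr 1
      by_cases hev : Even m
      · rw [if_pos ⟨hev, by omega⟩, if_pos hev]
      · rw [if_neg (fun h => hev h.1), if_neg hev]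
    · exact hu3
    · exact hv2
    · exact hv3
    · intro n; rw [hv1 n, hu1 (n + 1)]; rfl
  -- the intermediate data b
  have hb' : ∀ k, b k = u (k + 1) (2 ^ k) := by
    intro k
    match k with
    | 0 =>
      have hc1 : 0 < N - 1 := by omega
      have hc2 : 1 < N := by omega
      have hc3 : 0 < N := by omega
      have h0 := hv2 0 (by omega) 0
      have h1 := hu2 1 (by omega) 0
      simp only [transfer, hu1, hv1, sigmaPlus, hc1, hc2, hc3, if_true, Nat.zero_div,
        mul_zero, zero_add, Even.zero, ne_eq, not_true_eq_false, and_false, if_false,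
        and_true, one_ne_zero, not_false_eq_true, add_zero, zero_ne_one] at h0 h1
      rw [hb]
      show xiMap f a 0 + v 0 (2 ^ 0) = u 1 (2 ^ 0)
      rw [pow_zero, h0, h1]
      show f (a 0) (a 1) * a 0 + _ = _
      ring
    | (k + 1) =>
      have h := lemA (k + 1) (2 ^ (k + 1)) le_rfl (by omega)
      rw [hb]
      show xiMap f a (k + 1) + sol1 v (k + 1) = _
      rw [show xiMap f a (k + 1) = 0 from if_neg (by omega), zero_add]
      exact h
  -- Lemma B : w tracks u shifted by two scales on [1/2, 3/4]
  have lemB : ∀ n m : ℕ, m ≤ 2 ^ n → (n = 0 → m = 0) →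
      w n m = u (n + 1 + 1) (2 ^ (n + 1) + m) := by
    apply key_lemma f α (N - 1) hN2 (fun k m => u (k + 1) (2 ^ k + m)) w
    · intro k hk2 hkM m
      show u (k + 1) (2 ^ k + (m + 1)) = _
      have hrec := hu2 (k + 1) (by omega) (2 ^ k + m)
      rw [show 2 ^ k + (m + 1) = (2 ^ k + m) + 1 from by omega, hrec]
      have hek : Even (2 ^ k) := (Nat.even_pow' (by omega)).mpr even_two
      obtain ⟨p, hp⟩ := hek
      have hk1 : 2 ^ k = 2 * 2 ^ (k - 1) := by
        rw [← pow_succ']; congr 1; omega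
      congr 1
      · -- outgoing term
        unfold transfer
        rw [show 2 * (2 ^ k + m) = 2 ^ (k + 1) + 2 * m from by rw [pow_succ]; ring]
        by_cases h : k + 1 < N
        · rw [if_pos h, if_pos (by omega)]
        · rw [if_neg h, if_neg (by omega)]
      · -- incoming term
        by_cases hev : Even m
        · obtain ⟨r, hr⟩ := hev
          have hcond : Even (2 ^ k + m) ∧ k + 1 ≠ 0 := ⟨⟨p + r, by omega⟩, by omega⟩
          rw [if_pos hcond, if_pos ⟨r, hr⟩]
          have hdiv : (2 ^ k + m) / 2 = 2 ^ (k - 1) + m / 2 := by omega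
          have hdiv2 : m / 2 = r := by omega
          rw [hdiv]
          unfold transfer
          rw [show k + 1 - 1 = k from by omega, show k - 1 + 1 = k from by omega]
          rw [show 2 * (2 ^ (k - 1) + m / 2) = 2 ^ k + 2 * (m / 2) from by
            rw [hk1]; ring]
          by_cases h : k < N
          · rw [if_pos h, if_pos (by omega)]
          · rw [if_neg h, if_neg (by omega)]
        · rw [if_neg (fun h => hev ((Nat.even_add.mp h.1).mp ⟨p, hp⟩)), if_neg hev]
    · intro k hk m hm
      show u (k + 1) (2 ^ k + m) = 0
      exact hu3 (k + 1) (by omega) _ (by positivity)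
    · exact hw2
    · exact hw3
    · intro n
      show w n 0 = u (n + 1 + 1) (2 ^ (n + 1) + 0)
      rw [hw1 n, add_zero]
      exact hb' (n + 1)
  intro j
  match j with
  | 0 =>
    have hb0 : b 0 = u 1 1 := by simpa using hb' 0
    have hb1 : b 1 = u 2 2 := by simpa using hb' 1
    have hb2 : b 2 = u 3 4 := by simpa using hb' 2
    have hw00 : w 0 0 = b 1 := hw1 0
    have hw10 : w 1 0 = b 2 := hw1 1
    have hrec := hu2 2 hN 2
    have hw01 := hw2 0 (by omega) 0
    have htr : transfer f (N - 1 - 1) α w 0 0 = transfer f N α u 2 2 := by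
      unfold transfer
      by_cases h : 2 < N
      · rw [if_pos (by omega : 0 < N - 1 - 1), if_pos h, hw00, hb1]
        norm_num [hw10, hb2]
      · rw [if_neg (by omega), if_neg (by omega)]
    have htr1 : transfer f N α u 1 1 = f (b 0) (b 1) := by
      unfold transfer
      rw [if_pos (by omega : 1 < N), hb0, hb1]
    show u (2 + 0) (3 * 2 ^ 0) = xiMap f b 0 + sol1 w 0
    norm_num
    show u 2 3 = xiMap f b 0 + w 0 (2 ^ 0)
    rw [pow_zero]
    have hrec' : u 2 3 = (1 - transfer f N α u 2 2) * u 2 2 + f (b 0) (b 1) * b 0 := by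
      rw [show (3:ℕ) = 2 + 1 from rfl, hrec, htr1]
      norm_num [hb0]
    have hw01' : w 0 1 = (1 - transfer f N α u 2 2) * u 2 2 := by
      rw [hw01, htr, hw00, hb1]
      norm_num
    rw [hrec', hw01']
    show _ = f (b 0) (b 1) * b 0 + _
    ring
  | (s + 1) =>
    have h1 := lemB (s + 1) (2 ^ (s + 1)) le_rfl (by omega)
    show u (2 + (s + 1)) (3 * 2 ^ (s + 1)) = xiMap f b (s + 1) + sol1 w (s + 1)
    rw [show xiMap f b (s + 1) = 0 from if_neg (by omega), zero_add]
    show _ = w (s + 1) (2 ^ (s + 1))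
    rw [h1]
    congr 1
    · omega
    · rw [pow_succ]; ring
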